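/- The no-signaling box P^max = (1/2)P^PR + (1/2)P^c, i.e. P^max(a,b|x,y) = (1/8)[2 + (−1)^{a⊕b⊕xy} + (−1)^{a⊕b}] for a,b,x,y ∈ {0,1}, is a CHSH marginal model in which the pairs (A_0,B_0), (A_0,B_1), (A_1,B_0) are perfectly correlated with uniform marginals and the pair (A_1,B_1) is uniformly distributed on {0,1}²; it satisfies CHSH_E(P^max) = 1, the maximal possible value for two-outcome CHSH marginal models, and its CHSH value ⟨A_0B_0⟩+⟨A_0B_1⟩+⟨A_1B_0⟩−⟨A_1B_1⟩ equals 3, which exceeds Tsirelson's bound 2√2. -/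

import Mathlib

/-- Shannon entropy (in bits) of a finitely supported weight function,
with the convention `0 * logb 2 0 = 0` (automatic since `Real.logb 2 0 = 0`). -/
noncomputable def shannonEntropy {β : Type*} [Fintype β] (q : β → ℝ) : ℝ :=
  -∑ b, q b * Real.logb 2 (q b)

/-- Joint Shannon entropy of a bipartite outcome distribution. -/
noncomputable def pairEntropy {β γ : Type*} [Fintype β] [Fintype γ] (q : β → γ → ℝ) : ℝ :=
  -∑ b, ∑ c, q b c * Real.logb 2 (q b c)

/-- First-component marginal of a bipartite outcome distribution. -/
noncomputable def margFst {β γ : Type*} [Fintype γ] (q : β → γ → ℝ) : β → ℝ :=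
  fun b => ∑ c, q b c

/-- Second-component marginal of a bipartite outcome distribution. -/
noncomputable def margSnd {β γ : Type*} [Fintype β] (q : β → γ → ℝ) : γ → ℝ :=
  fun c => ∑ b, q b c

/-- The entropic CHSH expression
`CHSH_E = H(A₁B₁) + H(A₀) + H(B₀) − H(A₀B₀) − H(A₀B₁) − H(A₁B₀)`
of a CHSH box `P x y a b = P(a,b|x,y)`. -/
noncomputable def CHSHE {β γ : Type*} [Fintype β] [Fintype γ]
    (P : Fin 2 → Fin 2 → β → γ → ℝ) : ℝ :=
  pairEntropy (P 1 1) + shannonEntropy (margFst (P 0 0)) + shannonEntropy (margSnd (P 0 0))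
    - pairEntropy (P 0 0) - pairEntropy (P 0 1) - pairEntropy (P 1 0)

/-- The box `P^max = (1/2)P^PR + (1/2)P^c`,
i.e. `P^max(a,b|x,y) = (1/8)[2 + (−1)^(a⊕b⊕xy) + (−1)^(a⊕b)]`. -/
noncomputable def Pmax : Fin 2 → Fin 2 → Fin 2 → Fin 2 → ℝ :=
  fun x y a b =>
    (1 / 8) * (2 + (-1 : ℝ) ^ (a.val + b.val + x.val * y.val) + (-1 : ℝ) ^ (a.val + b.val))

/-- The correlator `⟨A_xB_y⟩ = ∑_{a,b} (−1)^(a⊕b) P(a,b|x,y)`. -/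
noncomputable def corr (P : Fin 2 → Fin 2 → Fin 2 → Fin 2 → ℝ) (x y : Fin 2) : ℝ :=
  ∑ a, ∑ b, (-1 : ℝ) ^ (a.val + b.val) * P x y a b

section AuxEntropy
open Finset

lemma shannonEntropy_eq' {β : Type*} [Fintype β] (q : β → ℝ) :
    shannonEntropy q = -(∑ b, q b * Real.log (q b)) / Real.log 2 := by
  simp only [shannonEntropy, Real.logb, neg_div, Finset.sum_div, mul_div_assoc]

lemma pairEntropy_eq' {β γ : Type*} [Fintype β] [Fintype γ] (q : β → γ → ℝ) :
    pairEntropy q = -(∑ b, ∑ c, q b c * Real.log (q b c)) / Real.log 2 := by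
  simp only [pairEntropy, Real.logb, neg_div, Finset.sum_div, mul_div_assoc]

lemma gibbs' {ι : Type*} [Fintype ι] (p q : ι → ℝ) (hp : ∀ i, 0 ≤ p i)
    (hqnn : ∀ i, 0 ≤ q i) (hq0 : ∀ i, p i ≠ 0 → 0 < q i)
    (hq : ∑ i, q i ≤ 1) (hp1 : ∑ i, p i = 1) :
    ∑ i, p i * Real.log (q i) ≤ ∑ i, p i * Real.log (p i) := by
  have key : ∀ i, p i * Real.log (q i) - p i * Real.log (p i) ≤ q i - p i := by
    intro i
    rcases eq_or_lt_of_le (hp i) with h | h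
    · simp [← h, hqnn i]
    · have hqi := hq0 i (by positivity)
      have hlog : Real.log (q i / p i) ≤ q i / p i - 1 :=
        Real.log_le_sub_one_of_pos (by positivity)
      rw [Real.log_div (ne_of_gt hqi) (ne_of_gt h)] at hlog
      calc p i * Real.log (q i) - p i * Real.log (p i)
          = p i * (Real.log (q i) - Real.log (p i)) := by ring
        _ ≤ p i * (q i / p i - 1) := mul_le_mul_of_nonneg_left hlog (le_of_lt h)
        _ = q i - p i := by field_simp
  have hsum : ∑ i, (p i * Real.log (q i) - p i * Real.log (p i)) ≤ ∑ i, (q i - p i) :=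
    Finset.sum_le_sum fun i _ => key i
  rw [Finset.sum_sub_distrib, Finset.sum_sub_distrib, hp1] at hsum
  linarith

lemma entropy_le_one' (p : Fin 2 → ℝ) (hp : ∀ i, 0 ≤ p i) (hp1 : ∑ i, p i = 1) :
    shannonEntropy p ≤ 1 := by
  have h := gibbs' p (fun _ => 1/2) hp (fun _ => by norm_num) (fun _ _ => by norm_num)
    (by norm_num [Fin.sum_univ_two]) hp1
  have hl : ∑ i, p i * Real.log (1/2) = -Real.log 2 := by
    rw [← Finset.sum_mul, hp1, one_mul, one_div, Real.log_inv]
  rw [hl] at h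
  rw [shannonEntropy_eq']
  have h2 : (0:ℝ) < Real.log 2 := Real.log_pos (by norm_num)
  rw [div_le_one h2]
  linarith

lemma pairEntropy_le_sum' (q : Fin 2 → Fin 2 → ℝ) (hq : ∀ a b, 0 ≤ q a b)
    (h1 : ∑ a, ∑ b, q a b = 1) :
    pairEntropy q ≤ shannonEntropy (margFst q) + shannonEntropy (margSnd q) := by
  have hmF : ∀ a b, q a b ≤ margFst q a := by
    intro a b
    exact Finset.single_le_sum (fun c _ => hq a c) (Finset.mem_univ b)
  have hmS : ∀ a b, q a b ≤ margSnd q b := by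
    intro a b
    exact Finset.single_le_sum (fun c _ => hq c b) (Finset.mem_univ a)
  have hmFnn : ∀ a, 0 ≤ margFst q a := fun a => Finset.sum_nonneg fun c _ => hq a c
  have hmSnn : ∀ b, 0 ≤ margSnd q b := fun b => Finset.sum_nonneg fun c _ => hq c b
  have h := gibbs' (ι := Fin 2 × Fin 2) (fun i => q i.1 i.2)
    (fun i => margFst q i.1 * margSnd q i.2)
    (fun i => hq i.1 i.2)
    (fun i => mul_nonneg (hmFnn i.1) (hmSnn i.2))
    (fun i hi => by
      have h0 : 0 < q i.1 i.2 := lt_of_le_of_ne (hq i.1 i.2) (Ne.symm hi)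
      exact mul_pos (lt_of_lt_of_le h0 (hmF i.1 i.2)) (lt_of_lt_of_le h0 (hmS i.1 i.2)))
    (by
      rw [Fintype.sum_prod_type]
      have : ∑ a, ∑ b, margFst q a * margSnd q b
          = (∑ a, margFst q a) * (∑ b, margSnd q b) := by
        rw [Finset.sum_mul_sum]
      rw [this]
      have hF : ∑ a, margFst q a = 1 := by simpa [margFst] using h1
      have hS : ∑ b, margSnd q b = 1 := by
        simp only [margSnd]; rw [Finset.sum_comm]; exact h1
      rw [hF, hS]; norm_num)
    (by rw [Fintype.sum_prod_type]; exact h1)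
  rw [Fintype.sum_prod_type, Fintype.sum_prod_type] at h
  have hsplit : ∑ a, ∑ b, q a b * Real.log (margFst q a * margSnd q b)
      = (∑ a, margFst q a * Real.log (margFst q a))
        + (∑ b, margSnd q b * Real.log (margSnd q b)) := by
    have step : ∀ a b, q a b * Real.log (margFst q a * margSnd q b)
        = q a b * Real.log (margFst q a) + q a b * Real.log (margSnd q b) := by
      intro a b
      rcases eq_or_lt_of_le (hq a b) with h0 | h0
      · simp [← h0]
      · have hF : 0 < margFst q a := lt_of_lt_of_le h0 (hmF a b)
        have hS : 0 < margSnd q b := lt_of_lt_of_le h0 (hmS a b)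
        rw [Real.log_mul (ne_of_gt hF) (ne_of_gt hS)]; ring
    simp only [step, Finset.sum_add_distrib]
    congr 1
    · apply Finset.sum_congr rfl; intro a _
      rw [← Finset.sum_mul]; rfl
    · rw [Finset.sum_comm]
      apply Finset.sum_congr rfl; intro b _
      rw [← Finset.sum_mul]; rfl
  rw [hsplit] at h
  rw [pairEntropy_eq', shannonEntropy_eq', shannonEntropy_eq']
  have h2 : (0:ℝ) < Real.log 2 := Real.log_pos (by norm_num)
  rw [← add_div, div_le_div_iff_of_pos_right h2]
  linarith

lemma entropy_margFst_le' (q : Fin 2 → Fin 2 → ℝ) (hq : ∀ a b, 0 ≤ q a b) :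
    shannonEntropy (margFst q) ≤ pairEntropy q := by
  have key : ∀ a b, q a b * Real.log (q a b) ≤ q a b * Real.log (margFst q a) := by
    intro a b
    rcases eq_or_lt_of_le (hq a b) with h0 | h0
    · simp [← h0]
    · have hle : q a b ≤ margFst q a :=
        Finset.single_le_sum (fun c _ => hq a c) (Finset.mem_univ b)
      exact mul_le_mul_of_nonneg_left (Real.log_le_log h0 hle) (hq a b)
  have h : ∑ a, ∑ b, q a b * Real.log (q a b)
      ≤ ∑ a, margFst q a * Real.log (margFst q a) := by
    apply Finset.sum_le_sum; intro a _
    calc ∑ b, q a b * Real.log (q a b) ≤ ∑ b, q a b * Real.log (margFst q a) :=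
          Finset.sum_le_sum fun b _ => key a b
      _ = margFst q a * Real.log (margFst q a) := by rw [← Finset.sum_mul]; rfl
  rw [pairEntropy_eq', shannonEntropy_eq']
  have h2 : (0:ℝ) < Real.log 2 := Real.log_pos (by norm_num)
  rw [div_le_div_iff_of_pos_right h2]
  linarith

lemma entropy_margSnd_le' (q : Fin 2 → Fin 2 → ℝ) (hq : ∀ a b, 0 ≤ q a b) :
    shannonEntropy (margSnd q) ≤ pairEntropy q := by
  have key : ∀ a b, q a b * Real.log (q a b) ≤ q a b * Real.log (margSnd q b) := by
    intro a b
    rcases eq_or_lt_of_le (hq a b) with h0 | h0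
    · simp [← h0]
    · have hle : q a b ≤ margSnd q b :=
        Finset.single_le_sum (fun c _ => hq c b) (Finset.mem_univ a)
      exact mul_le_mul_of_nonneg_left (Real.log_le_log h0 hle) (hq a b)
  have h : ∑ a, ∑ b, q a b * Real.log (q a b)
      ≤ ∑ b, margSnd q b * Real.log (margSnd q b) := by
    rw [Finset.sum_comm]
    apply Finset.sum_le_sum; intro b _
    calc ∑ a, q a b * Real.log (q a b) ≤ ∑ a, q a b * Real.log (margSnd q b) :=
          Finset.sum_le_sum fun a _ => key a b
      _ = margSnd q b * Real.log (margSnd q b) := by rw [← Finset.sum_mul]; rfl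
  rw [pairEntropy_eq', shannonEntropy_eq']
  have h2 : (0:ℝ) < Real.log 2 := Real.log_pos (by norm_num)
  rw [div_le_div_iff_of_pos_right h2]
  linarith

lemma chshe_le_one' (P : Fin 2 → Fin 2 → Fin 2 → Fin 2 → ℝ)
    (hnn : ∀ x y a b, 0 ≤ P x y a b) (hsum : ∀ x y, ∑ a, ∑ b, P x y a b = 1)
    (hF : ∀ x a, margFst (P x 0) a = margFst (P x 1) a)
    (hS : ∀ y b, margSnd (P 0 y) b = margSnd (P 1 y) b) :
    CHSHE P ≤ 1 := by
  have eF0 : margFst (P 0 0) = margFst (P 0 1) := funext (hF 0)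
  have eF1 : margFst (P 1 0) = margFst (P 1 1) := funext (hF 1)
  have eS0 : margSnd (P 0 0) = margSnd (P 1 0) := funext (hS 0)
  have eS1 : margSnd (P 0 1) = margSnd (P 1 1) := funext (hS 1)
  have h11 := pairEntropy_le_sum' (P 1 1) (hnn 1 1) (hsum 1 1)
  have h00a := entropy_margFst_le' (P 0 0) (hnn 0 0)
  have h00b := entropy_margSnd_le' (P 0 0) (hnn 0 0)
  have h01a := entropy_margFst_le' (P 0 1) (hnn 0 1)
  have h01b := entropy_margSnd_le' (P 0 1) (hnn 0 1)
  have h10a := entropy_margFst_le' (P 1 0) (hnn 1 0)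
  have h10b := entropy_margSnd_le' (P 1 0) (hnn 1 0)
  rw [← eF0] at h01a
  rw [eS1] at h01b
  rw [eF1] at h10a
  rw [← eS0] at h10b
  have hA1 : shannonEntropy (margFst (P 1 1)) ≤ 1 := by
    apply entropy_le_one'
    · intro a; exact Finset.sum_nonneg fun b _ => hnn 1 1 a b
    · exact hsum 1 1
  have hB1 : shannonEntropy (margSnd (P 1 1)) ≤ 1 := by
    apply entropy_le_one'
    · intro b; exact Finset.sum_nonneg fun a _ => hnn 1 1 a b
    · simp only [margSnd]; rw [Finset.sum_comm]; exact hsum 1 1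
  unfold CHSHE
  linarith

lemma logb_half' : Real.logb 2 (1/2) = -1 := by
  rw [one_div, Real.logb_inv, Real.logb_self_eq_one (by norm_num)]

lemma logb_quarter' : Real.logb 2 (1/4) = -2 := by
  rw [show (1/4 : ℝ) = ((2:ℝ)^(2:ℕ))⁻¹ by norm_num, Real.logb_inv, Real.logb_pow,
    Real.logb_self_eq_one (by norm_num)]
  norm_num

lemma pmax_val (x y : Fin 2) (h : ¬(x = 1 ∧ y = 1)) (a b : Fin 2) :
    Pmax x y a b = if a = b then 1 / 2 else 0 := by
  fin_cases x <;> fin_cases y <;> fin_cases a <;> fin_cases b <;>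
    simp_all [Pmax] <;> norm_num

lemma pmax_val11 (a b : Fin 2) : Pmax 1 1 a b = 1/4 := by
  fin_cases a <;> fin_cases b <;> norm_num [Pmax]

lemma chshe_pmax : CHSHE Pmax = 1 := by
  have hpe : ∀ x y : Fin 2, ¬(x = 1 ∧ y = 1) → pairEntropy (Pmax x y) = 1 := by
    intro x y h
    have e := pmax_val x y h
    rw [pairEntropy, Fin.sum_univ_two, Fin.sum_univ_two, Fin.sum_univ_two,
      e 0 0, e 0 1, e 1 0, e 1 1]
    norm_num [logb_half']
  have hpe11 : pairEntropy (Pmax 1 1) = 2 := by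
    rw [pairEntropy, Fin.sum_univ_two, Fin.sum_univ_two, Fin.sum_univ_two,
      pmax_val11 0 0, pmax_val11 0 1, pmax_val11 1 0, pmax_val11 1 1, logb_quarter']
    norm_num
  have hmf : shannonEntropy (margFst (Pmax 0 0)) = 1 := by
    have e := pmax_val 0 0 (by simp)
    rw [shannonEntropy, Fin.sum_univ_two]
    rw [show margFst (Pmax 0 0) 0 = 1/2 by
      rw [margFst, Fin.sum_univ_two, e 0 0, e 0 1]; norm_num]
    rw [show margFst (Pmax 0 0) 1 = 1/2 by
      rw [margFst, Fin.sum_univ_two, e 1 0, e 1 1]; norm_num]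
    rw [logb_half']; norm_num
  have hms : shannonEntropy (margSnd (Pmax 0 0)) = 1 := by
    have e := pmax_val 0 0 (by simp)
    rw [shannonEntropy, Fin.sum_univ_two]
    rw [show margSnd (Pmax 0 0) 0 = 1/2 by
      rw [margSnd, Fin.sum_univ_two, e 0 0, e 1 0]; norm_num]
    rw [show margSnd (Pmax 0 0) 1 = 1/2 by
      rw [margSnd, Fin.sum_univ_two, e 0 1, e 1 1]; norm_num]
    rw [logb_half']; norm_num
  rw [CHSHE, hpe11, hmf, hms, hpe 0 0 (by simp), hpe 0 1 (by simp), hpe 1 0 (by simp)]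
  norm_num

end AuxEntropy

/-- `P^max` is a CHSH marginal model (nonnegative, normalized, consistent marginals),
the pairs `(A₀,B₀)`, `(A₀,B₁)`, `(A₁,B₀)` are perfectly correlated with uniform
marginals while `(A₁,B₁)` is uniform on `{0,1}²`; it satisfies `CHSH_E(P^max) = 1`,
which is the maximal value over all two-outcome CHSH marginal models, and its CHSH
value is `3`, exceeding Tsirelson's bound `2√2`. -/


theorem Pmax_properties :
    ((∀ x y a b, 0 ≤ Pmax x y a b) ∧ (∀ x y, ∑ a, ∑ b, Pmax x y a b = 1) ∧
      (∀ x a, margFst (Pmax x 0) a = margFst (Pmax x 1) a) ∧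
      (∀ y b, margSnd (Pmax 0 y) b = margSnd (Pmax 1 y) b)) ∧
    (∀ x y : Fin 2, ¬(x = 1 ∧ y = 1) →
      (∀ a b : Fin 2, Pmax x y a b = if a = b then 1 / 2 else 0) ∧
      (∀ a, margFst (Pmax x y) a = 1 / 2) ∧ (∀ b, margSnd (Pmax x y) b = 1 / 2)) ∧
    (∀ a b : Fin 2, Pmax 1 1 a b = 1 / 4) ∧
    CHSHE Pmax = 1 ∧
    (∀ P : Fin 2 → Fin 2 → Fin 2 → Fin 2 → ℝ,
      (∀ x y a b, 0 ≤ P x y a b) → (∀ x y, ∑ a, ∑ b, P x y a b = 1) →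
      (∀ x a, margFst (P x 0) a = margFst (P x 1) a) →
      (∀ y b, margSnd (P 0 y) b = margSnd (P 1 y) b) →
      CHSHE P ≤ CHSHE Pmax) ∧
    corr Pmax 0 0 + corr Pmax 0 1 + corr Pmax 1 0 - corr Pmax 1 1 = 3 ∧
    2 * Real.sqrt 2 < 3 := by
  refine ⟨⟨?_, ?_, ?_, ?_⟩, ?_, pmax_val11, chshe_pmax, ?_, ?_, ?_⟩
  · intro x y a b
    fin_cases x <;> fin_cases y <;> fin_cases a <;> fin_cases b <;> norm_num [Pmax]
  · intro x y
    fin_cases x <;> fin_cases y <;> norm_num [Pmax, Fin.sum_univ_two]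
  · intro x a
    fin_cases x <;> fin_cases a <;> norm_num [Pmax, margFst, Fin.sum_univ_two]
  · intro y b
    fin_cases y <;> fin_cases b <;> norm_num [Pmax, margSnd, Fin.sum_univ_two]
  · intro x y h
    have e := pmax_val x y h
    refine ⟨e, ?_, ?_⟩
    · intro a
      rw [margFst, Fin.sum_univ_two, e a 0, e a 1]
      fin_cases a <;> norm_num
    · intro b
      rw [margSnd, Fin.sum_univ_two, e 0 b, e 1 b]
      fin_cases b <;> norm_num
  · intro P h1 h2 h3 h4
    rw [chshe_pmax]
    exact chshe_le_one' P h1 h2 h3 h4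
  · norm_num [corr, Pmax, Fin.sum_univ_two]
  · nlinarith [Real.sq_sqrt (show (0:ℝ) ≤ 2 by norm_num), Real.sqrt_nonneg 2]
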